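/- Under Assumption 1, let μ ∈ (0,1) and z ∈ (0,1) satisfy g(z, μ) = 0. Set w = β_eff(1, z, μ), y = 1 − γ/w, and L_eq = (1 − α)·L·(β_U − β_P)·(1 − μ)·(1 − y). Then z = C_P·w/(L·(w − γ)·(1 − α)·(β_U − β_P)) − (C_U − C_P)/L_eq − β_P/(β_U − β_P). -/

import Mathlib

set_option maxHeartbeats 1000000


/-- Effective infection rate β_eff(z_S, z_I, μ_S). -/
noncomputable def betaEff (a bP bU zS zI m : ℝ) : ℝ :=
  (bP + (bU - bP) * zI) * (a + (1 - a) * (zS * m + zI * (1 - m)))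

/-- Endemic infection level y_EE(z_S, z_I, μ_S). -/
noncomputable def yEE (a gam bP bU zS zI m : ℝ) : ℝ :=
  1 - gam / betaEff a bP bU zS zI m

/-- The function h(z_I, μ_S). -/
noncomputable def hFun (a gam bP bU L CP zI m : ℝ) : ℝ :=
  (1 - a) * L * (bP + (bU - bP) * zI) * yEE a gam bP bU 1 zI m - CP

/-- The function g(z_I, μ_S). -/
noncomputable def gFun (a gam bP bU L CP CU zI m : ℝ) : ℝ :=
  yEE a gam bP bU 1 zI m * (CU - CP)
    - (1 - m) * (1 - yEE a gam bP bU 1 zI m) * (-(hFun a gam bP bU L CP zI m))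

/-- Expected-utility difference ΔU[S̄]. -/
noncomputable def dUS (a bP bU L CP y zI : ℝ) : ℝ :=
  (1 - a) * L * (bP + (bU - bP) * zI) * y - CP

/-- Expected-utility difference ΔU[Ī]. -/
noncomputable def dUI (a bP bU L CP CU m y zI : ℝ) : ℝ :=
  ((1 - m) * (1 - y) / (y + (1 - m) * (1 - y))) *
    ((1 - a) * L * (bP + (bU - bP) * zI) * y - CU) + CU - CP

/-- Stationary Nash equilibrium for signal μ_S = m. -/
def IsSNE (a gam bP bU L CP CU m y zS zI : ℝ) : Prop :=
  y ∈ Set.Ioo (0:ℝ) 1 ∧ zS ∈ Set.Icc (0:ℝ) 1 ∧ zI ∈ Set.Icc (0:ℝ) 1 ∧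
  gam < betaEff a bP bU zS zI m ∧
  y = yEE a gam bP bU zS zI m ∧
  (0 < dUS a bP bU L CP y zI → zS = 0) ∧
  (dUS a bP bU L CP y zI < 0 → zS = 1) ∧
  (0 < dUI a bP bU L CP CU m y zI → zI = 0) ∧
  (dUI a bP bU L CP CU m y zI < 0 → zI = 1)

/-- Characterization of μ_S^max. -/
def IsMuMax (a gam bP bU L CP CU mmax : ℝ) : Prop :=
  (0 ≤ gFun a gam bP bU L CP CU 0 0 ∧ mmax = 0) ∨
  (gFun a gam bP bU L CP CU 0 0 < 0 ∧ mmax ∈ Set.Ioo (0:ℝ) 1 ∧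
    gFun a gam bP bU L CP CU 0 mmax = 0)

/-- The threshold μ_S^min. -/
noncomputable def muMin (a gam bU L CP CU : ℝ) : ℝ :=
  1 - (bU - gam) * (CU - CP) / (gam * (CP - (1 - a) * L * (bU - gam)))

theorem stmt15
    (a gam bP bU L CP CU : ℝ)
    (ha : a ∈ Set.Ioo (0:ℝ) 1) (hgam : gam ∈ Set.Ioo (0:ℝ) 1)
    (hbP : 0 < bP) (hbPU : bP < bU) (hbU1 : bU < 1)
    (hL : 0 < L) (hCP : 0 < CP) (hCPU : CP < CU)
    (hA1 : gam < a * bP)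
    (m z : ℝ) (hm : m ∈ Set.Ioo (0:ℝ) 1) (hz : z ∈ Set.Ioo (0:ℝ) 1)
    (hg : gFun a gam bP bU L CP CU z m = 0) :
    z = CP * betaEff a bP bU 1 z m /
          (L * (betaEff a bP bU 1 z m - gam) * (1 - a) * (bU - bP))
        - (CU - CP) /
          ((1 - a) * L * (bU - bP) * (1 - m) *
            (1 - (1 - gam / betaEff a bP bU 1 z m)))
        - bP / (bU - bP) := by
  obtain ⟨ha0, ha1⟩ := ha
  obtain ⟨hg0, hg1⟩ := hgam
  obtain ⟨hm0, hm1⟩ := hm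
  obtain ⟨hz0, hz1⟩ := hz
  have hf0 : (0:ℝ) ≤ (1 - a) * (1 * m + z * (1 - m)) := by
    nlinarith [mul_pos hz0 (sub_pos.2 hm1)]
  have hw : gam < betaEff a bP bU 1 z m := by
    unfold betaEff
    nlinarith [mul_nonneg (mul_nonneg (sub_pos.2 hbPU).le hz0.le)
        (show (0:ℝ) ≤ a + (1 - a) * (1 * m + z * (1 - m)) by nlinarith),
      mul_nonneg hbP.le hf0]
  have hw0 : (0:ℝ) < betaEff a bP bU 1 z m := lt_trans hg0 hw
  set w := betaEff a bP bU 1 z m with hwdef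
  have hwne : w ≠ 0 := ne_of_gt hw0
  have hwγ : w - gam ≠ 0 := ne_of_gt (sub_pos.2 hw)
  unfold gFun hFun yEE at hg
  rw [← hwdef] at hg
  have h1a : (1:ℝ) - a ≠ 0 := ne_of_gt (sub_pos.2 ha1)
  have h1m : (1:ℝ) - m ≠ 0 := ne_of_gt (sub_pos.2 hm1)
  have hbne : bU - bP ≠ 0 := ne_of_gt (sub_pos.2 hbPU)
  have hLne : L ≠ 0 := ne_of_gt hL
  have hgne : gam ≠ 0 := ne_of_gt hg0
  field_simp at hg
  set D := (1 - a) * L * (bU - bP) * (w - gam) * (1 - m) * gam with hDdef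
  have hD : D ≠ 0 := by
    rw [hDdef]
    exact mul_ne_zero (mul_ne_zero (mul_ne_zero (mul_ne_zero (mul_ne_zero h1a hLne) hbne) hwγ) h1m) hgne
  have keyw : (z * D) * w =
      (CP * w * (1 - m) * gam - (CU - CP) * w * (w - gam)
        - bP * (1 - a) * L * (w - gam) * (1 - m) * gam) * w := by
    rw [hDdef]
    linear_combination w * hg
  have key : z * D = CP * w * (1 - m) * gam - (CU - CP) * w * (w - gam)
      - bP * (1 - a) * L * (w - gam) * (1 - m) * gam :=
    mul_right_cancel₀ hwne keyw
  calc z = (z * D) / D := by field_simp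
    _ = (CP * w * (1 - m) * gam - (CU - CP) * w * (w - gam)
        - bP * (1 - a) * L * (w - gam) * (1 - m) * gam) / D := by rw [key]
    _ = _ := by
        rw [hDdef]
        field_simp
        ring_nf
        field_simp
        ring
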